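/- Under the assumption that h_m := sup_{n≤m-1}|G_{n,m} R_m| is summable, any bounded sequence (v_n) satisfying the homogeneous Volterra equation v_n = ∑_{m=n+1}^{∞} G_{n,m} R_m v_m is identically zero. Consequently the bounded solution of the inhomogeneous equation u_n = 1 + ∑_{m>n} G_{n,m} R_m u_m is unique. -/

import Mathlib

private lemma pow_aux (b d : ℝ) (hb : 0 ≤ b) (hd : 0 ≤ d) :
    ∀ k : ℕ, b ^ k * d * (k + 1) ≤ (b + d) ^ (k + 1) - b ^ (k + 1) := by
  intro k
  induction k with
  | zero => simp
  | succ k ih =>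
    have hbd : 0 ≤ b + d := by linarith
    have h1 := mul_le_mul_of_nonneg_left ih hbd
    have hpk : 0 ≤ b ^ k := pow_nonneg hb k
    have e1 : b ^ (k+1) = b ^ k * b := pow_succ b k
    have e2 : b ^ (k+1+1) = b ^ k * b * b := by rw [pow_succ, pow_succ]
    have e3 : (b+d) ^ (k+1+1) = (b+d) ^ (k+1) * (b+d) := pow_succ (b+d) (k+1)
    rw [e2, e3, e1]
    rw [e1] at h1
    push_cast
    nlinarith [mul_nonneg (mul_nonneg hpk hd) hd, mul_nonneg hpk hd,
      mul_nonneg (mul_nonneg hpk hb) hd]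


noncomputable def tailSum (h : ℕ → ℝ) (n : ℕ) : ℝ := ∑' m, if n < m then h m else 0

private lemma tail_summable {h : ℕ → ℝ} (hpos : ∀ m, 0 ≤ h m) (hsum : Summable h)
    (n : ℕ) : Summable (fun m => if n < m then h m else 0) :=
  hsum.of_nonneg_of_le (fun m => by by_cases hc : n < m <;> simp [hc, hpos m])
    (fun m => by by_cases hc : n < m <;> simp [hc, hpos m])

private lemma tail_nonneg {h : ℕ → ℝ} (hpos : ∀ m, 0 ≤ h m) (n : ℕ) : 0 ≤ tailSum h n :=
  tsum_nonneg fun m => by by_cases hc : n < m <;> simp [hc, hpos m]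

private lemma tail_mono {h : ℕ → ℝ} (hpos : ∀ m, 0 ≤ h m) (hsum : Summable h)
    {n n' : ℕ} (hle : n ≤ n') : tailSum h n' ≤ tailSum h n :=
  Summable.tsum_le_tsum (fun m => by
      split_ifs with h1 h2 h2
      · exact le_rfl
      · exact absurd (lt_of_le_of_lt hle h1) h2
      · exact hpos m
      · exact le_rfl)
    (tail_summable hpos hsum n') (tail_summable hpos hsum n)

private lemma tail_rec {h : ℕ → ℝ} (hpos : ∀ m, 0 ≤ h m) (hsum : Summable h)
    (n : ℕ) : tailSum h n = h (n+1) + tailSum h (n+1) := by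
  have key : ∀ m : ℕ, (if n < m then h m else 0)
      = (if m = n+1 then h (n+1) else 0) + (if n+1 < m then h m else 0) := by
    intro m
    rcases lt_trichotomy m (n+1) with hm | hm | hm
    · rw [if_neg (by omega), if_neg (by omega), if_neg (by omega)]; ring
    · rw [if_pos (by omega), if_pos hm, if_neg (by omega)]; rw [hm]; ring
    · rw [if_pos (by omega), if_neg (by omega), if_pos hm]; ring
  unfold tailSum
  rw [tsum_congr key,
    Summable.tsum_add ((hasSum_ite_eq (n+1) (h (n+1))).summable) (tail_summable hpos hsum (n+1)),
    tsum_ite_eq]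

private lemma tail_pow_tsum_le {h : ℕ → ℝ} (hpos : ∀ m, 0 ≤ h m) (hsum : Summable h)
    (k n : ℕ) :
    ∑' m, (if n < m then h m * tailSum h m ^ k else 0)
      ≤ tailSum h n ^ (k+1) / (k+1) := by
  set H := tailSum h with hHdef
  have hk : (0:ℝ) < (k:ℝ) + 1 := by positivity
  have gnn : ∀ m : ℕ, 0 ≤ (if n < m then h m * H m ^ k else 0) := by
    intro m
    by_cases hc : n < m <;>
      simp [hc, mul_nonneg (hpos m) (pow_nonneg (tail_nonneg hpos m) k)]
    exact mul_nonneg (hpos m) (pow_nonneg (tail_nonneg hpos m) k)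
  have partial_bound : ∀ N : ℕ,
      (∑ m ∈ Finset.range (n+1+N), if n < m then h m * H m ^ k else 0)
        + H (n+N) ^ (k+1) / (k+1) ≤ H n ^ (k+1) / (k+1) := by
    intro N
    induction N with
    | zero =>
      have : (∑ m ∈ Finset.range (n+1+0), if n < m then h m * H m ^ k else 0) = 0 :=
        Finset.sum_eq_zero fun m hm => by
          rw [Finset.mem_range] at hm; rw [if_neg (by omega)]
      rw [this]; simp
    | succ N ih =>
      have hstep : n+1+(N+1) = (n+1+N)+1 := by omega
      rw [hstep, Finset.sum_range_succ, if_pos (by omega)]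
      have key := pow_aux (H (n+N+1)) (h (n+N+1)) (tail_nonneg hpos (n+N+1))
        (hpos (n+N+1)) k
      have hrec : H (n+N) = h (n+N+1) + H (n+N+1) := tail_rec hpos hsum (n+N)
      have hbd : h (n+1+N) * H (n+1+N) ^ k + H (n+N+1) ^ (k+1) / (k+1)
          ≤ H (n+N) ^ (k+1) / (k+1) := by
        have h1 : n+1+N = n+N+1 := by omega
        rw [h1, hrec, add_comm (h (n+N+1)) (H (n+N+1))]
        have h3 : h (n+N+1) * H (n+N+1) ^ k
            ≤ ((H (n+N+1) + h (n+N+1)) ^ (k+1) - H (n+N+1) ^ (k+1)) / ((k:ℝ)+1) := by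
          rw [le_div_iff₀ hk]; nlinarith [key]
        have h4 := sub_div ((H (n+N+1) + h (n+N+1)) ^ (k+1))
          (H (n+N+1) ^ (k+1)) ((k:ℝ)+1)
        linarith
      have h2 : n+1+N = n+N+1 := by omega
      calc (∑ m ∈ Finset.range (n+1+N), if n < m then h m * H m ^ k else 0)
            + h (n+1+N) * H (n+1+N) ^ k + H (n+(N+1)) ^ (k+1) / (k+1)
          = (∑ m ∈ Finset.range (n+1+N), if n < m then h m * H m ^ k else 0)
            + (h (n+1+N) * H (n+1+N) ^ k + H (n+N+1) ^ (k+1) / (k+1)) := by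
            rw [show n+(N+1) = n+N+1 from by omega]; ring
        _ ≤ (∑ m ∈ Finset.range (n+1+N), if n < m then h m * H m ^ k else 0)
            + H (n+N) ^ (k+1) / (k+1) := by linarith [hbd]
        _ ≤ H n ^ (k+1) / (k+1) := ih
  apply Real.tsum_le_of_sum_range_le gnn
  intro N
  calc (∑ m ∈ Finset.range N, if n < m then h m * H m ^ k else 0)
      ≤ ∑ m ∈ Finset.range (n+1+N), if n < m then h m * H m ^ k else 0 :=
        Finset.sum_le_sum_of_subset_of_nonneg
          (Finset.range_subset_range.mpr (by omega)) (fun m _ _ => gnn m)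
    _ ≤ H n ^ (k+1) / (k+1) := by
        have := partial_bound N
        have hnn : 0 ≤ H (n+N) ^ (k+1) / (k+1) :=
          div_nonneg (pow_nonneg (tail_nonneg hpos _) _) (le_of_lt hk)
        linarith

theorem volterra_solution_unique (G : ℕ → ℕ → ℂ) (R : ℕ → ℂ) (h : ℕ → ℝ)
    (hpos : ∀ m, 0 ≤ h m) (hsum : Summable h)
    (hGR : ∀ n m : ℕ, n + 1 ≤ m → ‖G n m * R m‖ ≤ h m) :
    (∀ v : ℕ → ℂ, (∃ C : ℝ, ∀ n, ‖v n‖ ≤ C) →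
      (∀ n : ℕ, Summable (fun m : ℕ => if n < m then G n m * R m * v m else 0)) →
      (∀ n : ℕ, v n = ∑' m : ℕ, if n < m then G n m * R m * v m else 0) →
      ∀ n, v n = 0) ∧
    (∀ u₁ u₂ : ℕ → ℂ,
      (∃ C : ℝ, ∀ n, ‖u₁ n‖ ≤ C) → (∃ C : ℝ, ∀ n, ‖u₂ n‖ ≤ C) →
      (∀ n : ℕ, Summable (fun m : ℕ => if n < m then G n m * R m * u₁ m else 0)) →
      (∀ n : ℕ, Summable (fun m : ℕ => if n < m then G n m * R m * u₂ m else 0)) →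
      (∀ n : ℕ, u₁ n = 1 + ∑' m : ℕ, if n < m then G n m * R m * u₁ m else 0) →
      (∀ n : ℕ, u₂ n = 1 + ∑' m : ℕ, if n < m then G n m * R m * u₂ m else 0) →
      u₁ = u₂) := by
  set H := tailSum h with hHdef
  have key : ∀ v : ℕ → ℂ, (∃ C : ℝ, ∀ n, ‖v n‖ ≤ C) →
      (∀ n : ℕ, Summable (fun m : ℕ => if n < m then G n m * R m * v m else 0)) →
      (∀ n : ℕ, v n = ∑' m : ℕ, if n < m then G n m * R m * v m else 0) →
      ∀ n, v n = 0 := by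
    rintro v ⟨C, hC⟩ hs he
    have hC0 : 0 ≤ C := le_trans (norm_nonneg _) (hC 0)
    have bound : ∀ k : ℕ, ∀ n : ℕ, ‖v n‖ ≤ C * H n ^ k / k.factorial := by
      intro k
      induction k with
      | zero => intro n; simpa using hC n
      | succ k ih =>
        intro n
        have hfact : (0:ℝ) < (k.factorial : ℝ) := by positivity
        have hnormle : ∀ m : ℕ, ‖if n < m then G n m * R m * v m else 0‖
            ≤ (if n < m then h m * (C * H m ^ k / k.factorial) else 0) := by
          intro m
          by_cases hc : n < m
          · rw [if_pos hc, if_pos hc]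
            calc ‖G n m * R m * v m‖ = ‖G n m * R m‖ * ‖v m‖ := norm_mul _ _
              _ ≤ h m * (C * H m ^ k / k.factorial) :=
                  mul_le_mul (hGR n m hc) (ih m) (norm_nonneg _) (hpos m)
          · simp [hc]
        have hgnn : ∀ m : ℕ,
            0 ≤ (if n < m then h m * (C * H m ^ k / k.factorial) else 0) :=
          fun m => le_trans (norm_nonneg _) (hnormle m)
        have hgs : Summable
            (fun m => if n < m then h m * (C * H m ^ k / k.factorial) else 0) := by
          apply Summable.of_nonneg_of_le hgnn _ (hsum.mul_left (C * H 0 ^ k / k.factorial))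
          intro m
          by_cases hc : n < m
          · rw [if_pos hc]
            have hHm : H m ^ k ≤ H 0 ^ k :=
              pow_le_pow_left₀ (tail_nonneg hpos m) (tail_mono hpos hsum (Nat.zero_le m)) k
            have hinner : C * H m ^ k / k.factorial ≤ C * H 0 ^ k / k.factorial := by
              apply div_le_div_of_nonneg_right ?_ hfact.le
              exact mul_le_mul_of_nonneg_left hHm hC0
            calc h m * (C * H m ^ k / k.factorial)
                ≤ h m * (C * H 0 ^ k / k.factorial) :=
                  mul_le_mul_of_nonneg_left hinner (hpos m)
              _ = C * H 0 ^ k / k.factorial * h m := by ring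
          · rw [if_neg hc]
            exact mul_nonneg (mul_nonneg (mul_nonneg hC0
              (pow_nonneg (tail_nonneg hpos 0) k)) (le_of_lt (inv_pos.mpr hfact))
              |>.trans_eq (by ring)) (hpos m) |>.trans_eq rfl
        have hfs : Summable (fun m => ‖if n < m then G n m * R m * v m else 0‖) :=
          hgs.of_nonneg_of_le (fun m => norm_nonneg _) hnormle
        have hfacnn : (0:ℝ) ≤ C / k.factorial := div_nonneg hC0 (le_of_lt hfact)
        calc ‖v n‖ = ‖∑' m : ℕ, if n < m then G n m * R m * v m else 0‖ := by rw [← he n]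
          _ ≤ ∑' m : ℕ, ‖if n < m then G n m * R m * v m else 0‖ :=
              norm_tsum_le_tsum_norm hfs
          _ ≤ ∑' m : ℕ, (if n < m then h m * (C * H m ^ k / k.factorial) else 0) :=
              Summable.tsum_le_tsum hnormle hfs hgs
          _ = (C / k.factorial) * ∑' m : ℕ, (if n < m then h m * H m ^ k else 0) := by
              rw [← tsum_mul_left]
              apply tsum_congr
              intro m
              by_cases hc : n < m
              · rw [if_pos hc, if_pos hc]; ring
              · rw [if_neg hc, if_neg hc]; ring
          _ ≤ (C / k.factorial) * (H n ^ (k+1) / (k+1)) :=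
              mul_le_mul_of_nonneg_left (tail_pow_tsum_le hpos hsum k n) hfacnn
          _ = C * H n ^ (k+1) / (k+1).factorial := by
              rw [Nat.factorial_succ]
              push_cast
              rw [div_mul_div_comm]
              ring
    intro n
    have ht : Filter.Tendsto (fun k : ℕ => C * H n ^ k / k.factorial)
        Filter.atTop (nhds 0) := by
      have h1 := (FloorSemiring.tendsto_pow_div_factorial_atTop (H n)).const_mul C
      simpa [mul_div_assoc] using h1
    have hle : ‖v n‖ ≤ 0 :=
      le_of_tendsto_of_tendsto' tendsto_const_nhds ht (fun k => bound k n)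
    exact norm_le_zero_iff.mp hle
  refine ⟨key, ?_⟩
  rintro u₁ u₂ ⟨C₁, hC₁⟩ ⟨C₂, hC₂⟩ hs₁ hs₂ he₁ he₂
  set v : ℕ → ℂ := fun n => u₁ n - u₂ n with hv
  have hfun : ∀ n m : ℕ, (if n < m then G n m * R m * v m else 0)
      = (if n < m then G n m * R m * u₁ m else 0)
        - (if n < m then G n m * R m * u₂ m else 0) := by
    intro n m
    by_cases hc : n < m
    · rw [if_pos hc, if_pos hc, if_pos hc]; simp [hv]; ring
    · rw [if_neg hc, if_neg hc, if_neg hc]; ring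
  have hsv : ∀ n : ℕ, Summable (fun m : ℕ => if n < m then G n m * R m * v m else 0) :=
    fun n => ((hs₁ n).sub (hs₂ n)).congr (fun m => (hfun n m).symm)
  have hev : ∀ n : ℕ, v n = ∑' m : ℕ, if n < m then G n m * R m * v m else 0 := by
    intro n
    rw [show v n = u₁ n - u₂ n from rfl, he₁ n, he₂ n, tsum_congr (hfun n),
      Summable.tsum_sub (hs₁ n) (hs₂ n)]
    ring
  have hzero := key v ⟨C₁ + C₂,
    fun n => le_trans (norm_sub_le _ _) (add_le_add (hC₁ n) (hC₂ n))⟩ hsv hev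
  funext n
  have := hzero n
  rw [hv] at this
  exact sub_eq_zero.mp this
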